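/- arXiv:2303.02474 — 2 statements merged into one kernel-verified Lean document; each statement's English description precedes it below -/
import Mathlib

section
/- Let W ∈ ℤ^{m×n} have entries of absolute value at most Δ, let W' ∈ ℝ^{k×n} have all rows in the row span of W, and fix z ∈ ℤ^n. Then the set B_N = {W'x : x ∈ {0,1}^n, ‖z − x‖₁ ≤ N} has cardinality at most (2NΔ+1)^m. -/
open Matrix BigOperators

/-- With `W ∈ ℤ^{m×n}` having entries bounded by `Δ`, `W'` having rows in the
row span of `W`, and `z ∈ ℤ^n`, the set `B_N = {W'x : x ∈ {0,1}^n, ‖z − x‖₁ ≤ N}` has at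
most `(2NΔ+1)^m` elements. -/
theorem stmt5 (m n k : ℕ) (Δ N : ℕ) (W : Matrix (Fin m) (Fin n) ℤ)
    (hW : ∀ i j, |W i j| ≤ (Δ : ℤ))
    (W' : Matrix (Fin k) (Fin n) ℝ)
    (hrows : ∀ i : Fin k,
      W' i ∈ Submodule.span ℝ (Set.range fun r : Fin m => fun j => ((W r j : ℤ) : ℝ)))
    (z : Fin n → ℤ) :
    let B : Set (Fin k → ℝ) :=
      {v | ∃ x : Fin n → ℤ, (∀ i, x i = 0 ∨ x i = 1) ∧ (∑ i, |z i - x i|) ≤ (N : ℤ) ∧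
        v = W'.mulVec fun i => ((x i : ℤ) : ℝ)}
    B.Finite ∧ B.ncard ≤ (2 * N * Δ + 1) ^ m := by
  intro B
  classical
  -- the set of admissible x
  set X : Set (Fin n → ℤ) :=
    {x | (∀ i, x i = 0 ∨ x i = 1) ∧ (∑ i, |z i - x i|) ≤ (N : ℤ)} with hX
  set g : (Fin n → ℤ) → (Fin k → ℝ) :=
    fun x => W'.mulVec fun i => ((x i : ℤ) : ℝ) with hg
  set h : (Fin n → ℤ) → (Fin m → ℤ) :=
    fun x => W.mulVec (fun j => x j - z j) with hh
  have hBimg : B = g '' X := by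
    ext v
    simp only [hX, hg, Set.mem_image, Set.mem_setOf_eq, B]
    constructor
    · rintro ⟨x, h1, h2, h3⟩; exact ⟨x, ⟨h1, h2⟩, h3.symm⟩
    · rintro ⟨x, ⟨h1, h2⟩, h3⟩; exact ⟨x, h1, h2, h3.symm⟩
  have hXfin : X.Finite := by
    have : X ⊆ Set.pi Set.univ (fun _ : Fin n => ({0, 1} : Set ℤ)) := by
      rintro x ⟨h1, _⟩ i _
      rcases h1 i with h | h <;> simp [h]
    exact (Set.Finite.pi fun _ => (Set.finite_singleton 1).insert 0).subset this
  -- key: equal W-images give equal W'-images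
  have key : ∀ x y : Fin n → ℤ, W.mulVec x = W.mulVec y → g x = g y := by
    intro x y hxy
    funext i
    have hdot : ∀ v ∈ Submodule.span ℝ
        (Set.range fun r : Fin m => fun j => ((W r j : ℤ) : ℝ)),
        v ⬝ᵥ (fun j => ((x j : ℤ) : ℝ)) = v ⬝ᵥ (fun j => ((y j : ℤ) : ℝ)) := by
      intro v hv
      induction hv using Submodule.span_induction with
      | mem v hv =>
        obtain ⟨r, rfl⟩ := hv
        have hr : W.mulVec x r = W.mulVec y r := congrFun hxy r
        have : ∀ u : Fin n → ℤ,
            (fun j => ((W r j : ℤ) : ℝ)) ⬝ᵥ (fun j => ((u j : ℤ) : ℝ))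
              = ((W.mulVec u r : ℤ) : ℝ) := by
          intro u
          simp [dotProduct, Matrix.mulVec, Int.cast_sum]
        rw [this, this, hr]
      | zero => simp
      | add v w _ _ hv hw => simp [add_dotProduct, hv, hw]
      | smul c v _ hv => simp [smul_dotProduct, hv]
    exact hdot (W' i) (hrows i)
  -- factor g through h on X
  set φ : (Fin m → ℤ) → (Fin k → ℝ) :=
    fun w => if hw : ∃ x ∈ X, h x = w then g hw.choose else 0 with hφ
  have hfactor : ∀ x ∈ X, g x = φ (h x) := by
    intro x hx
    have hex : ∃ x' ∈ X, h x' = h x := ⟨x, hx, rfl⟩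
    simp only [hφ, dif_pos hex]
    have hchoose := hex.choose_spec.2
    apply key
    have hsub : ∀ u : Fin n → ℤ, h u = W.mulVec u - W.mulVec z := by
      intro u
      funext i
      simp [hh, Matrix.mulVec, dotProduct, mul_sub, Finset.sum_sub_distrib, Pi.sub_apply]
    have hc2 : W.mulVec hex.choose - W.mulVec z = W.mulVec x - W.mulVec z := by
      rw [← hsub, ← hsub]; exact hchoose
    exact (sub_left_inj.mp hc2).symm
  have himg : g '' X = φ '' (h '' X) := by
    rw [Set.image_image]
    exact Set.image_congr hfactor
  -- the box
  set T : Finset (Fin m → ℤ) :=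
    Fintype.piFinset fun _ : Fin m => Finset.Icc (-(N * Δ : ℤ)) (N * Δ : ℤ) with hT
  have hbox : ∀ x ∈ X, h x ∈ T := by
    rintro x ⟨h1, h2⟩
    simp only [hT, Fintype.mem_piFinset, Finset.mem_Icc]
    intro i
    have habs : |h x i| ≤ (N * Δ : ℤ) := by
      have : h x i = ∑ j, W i j * (x j - z j) := by
        simp [hh, Matrix.mulVec, dotProduct]
      rw [this]
      calc |∑ j, W i j * (x j - z j)| ≤ ∑ j, |W i j * (x j - z j)| :=
            Finset.abs_sum_le_sum_abs _ _
        _ ≤ ∑ j, (Δ : ℤ) * |z j - x j| := by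
            apply Finset.sum_le_sum
            intro j _
            rw [abs_mul]
            have h1' : |x j - z j| = |z j - x j| := abs_sub_comm _ _
            rw [h1']
            exact mul_le_mul_of_nonneg_right (hW i j) (abs_nonneg _)
        _ = (Δ : ℤ) * ∑ j, |z j - x j| := by rw [Finset.mul_sum]
        _ ≤ (Δ : ℤ) * N := by
            exact mul_le_mul_of_nonneg_left h2 (by positivity)
        _ = (N * Δ : ℤ) := by ring
    constructor
    · linarith [neg_abs_le (h x i)]
    · linarith [le_abs_self (h x i)]
  have hhXfin : (h '' X).Finite := hXfin.image h
  have hBfin : B.Finite := by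
    rw [hBimg]; exact hXfin.image g
  refine ⟨hBfin, ?_⟩
  calc B.ncard = (φ '' (h '' X)).ncard := by rw [hBimg, himg]
    _ ≤ (h '' X).ncard := Set.ncard_image_le hhXfin
    _ ≤ (T : Set (Fin m → ℤ)).ncard := by
        apply Set.ncard_le_ncard _ (T.finite_toSet)
        rintro w ⟨x, hx, rfl⟩
        exact hbox x hx
    _ = T.card := Set.ncard_coe_finset T
    _ = (2 * N * Δ + 1) ^ m := by
        rw [hT, Fintype.card_piFinset]
        have : (Finset.Icc (-(N * Δ : ℤ)) (N * Δ : ℤ)).card = 2 * N * Δ + 1 := by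
          rw [Int.card_Icc]
          have : ((N : ℤ) * Δ + 1 - -(N * Δ)) = ((2 * N * Δ + 1 : ℕ) : ℤ) := by
            push_cast; ring
          rw [this, Int.toNat_natCast]
        simp [this]
end

section
/- Let g : ℝ^m → ℝ be convex, W ∈ ℝ^{m×n}, and c ∈ ℝ^n. Suppose the continuous relaxation min{cᵀx + g(Wx) : x ∈ [0,1]^n} attains its minimum. Then there exists an optimal solution z of the relaxation with at most m fractional components, i.e., |{i : z_i ∉ {0,1}}| ≤ m. -/
open Matrix BigOperators Finset

noncomputable def fracSet (n : ℕ) (z : Fin n → ℝ) : Finset (Fin n) :=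
  Finset.univ.filter (fun i => z i ≠ 0 ∧ z i ≠ 1)

lemma step_lemma {m n : ℕ} (W : Matrix (Fin m) (Fin n) ℝ) (c : Fin n → ℝ)
    (g : (Fin m → ℝ) → ℝ) (z : Fin n → ℝ)
    (hz : ∀ i, 0 ≤ z i ∧ z i ≤ 1)
    (d : Fin n → ℝ) (hd0 : ∃ i, d i ≠ 0)
    (hsupp : ∀ i, d i ≠ 0 → i ∈ fracSet n z)
    (hWd : W.mulVec d = 0)
    (hcd : ∑ i, c i * d i ≤ 0) :
    ∃ z' : Fin n → ℝ, (∀ i, 0 ≤ z' i ∧ z' i ≤ 1) ∧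
      ((∑ i, c i * z' i) + g (W.mulVec z') ≤ (∑ i, c i * z i) + g (W.mulVec z)) ∧
      fracSet n z' ⊂ fracSet n z := by
  classical
  set S : Finset (Fin n) := Finset.univ.filter (fun i => d i ≠ 0) with hS
  have hSne : S.Nonempty := by
    obtain ⟨i, hi⟩ := hd0
    exact ⟨i, by simp [hS, hi]⟩
  have hmemS : ∀ i, i ∈ S ↔ d i ≠ 0 := fun i => by simp [hS]
  have hfrac : ∀ i, i ∈ fracSet n z → 0 < z i ∧ z i < 1 := by
    intro i hi
    simp only [fracSet, Finset.mem_filter] at hi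
    exact ⟨lt_of_le_of_ne (hz i).1 (Ne.symm hi.2.1), lt_of_le_of_ne (hz i).2 hi.2.2⟩
  set b : Fin n → ℝ := fun i => if 0 < d i then (1 - z i) / d i else z i / (-d i) with hb
  have hbpos : ∀ i ∈ S, 0 < b i := by
    intro i hi
    have hdne : d i ≠ 0 := (hmemS i).1 hi
    have hzi := hfrac i (hsupp i hdne)
    by_cases hdi : 0 < d i
    · simp only [hb, if_pos hdi]
      exact div_pos (by linarith [hzi.2]) hdi
    · have hdneg : d i < 0 := lt_of_le_of_ne (not_lt.1 hdi) hdne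
      simp only [hb, if_neg hdi]
      exact div_pos hzi.1 (by linarith)
  obtain ⟨i₀, hi₀S, hi₀min⟩ := S.exists_min_image b hSne
  set t := b i₀ with ht
  have htpos : 0 < t := hbpos i₀ hi₀S
  set z' : Fin n → ℝ := fun i => z i + t * d i with hz'
  have hbound : ∀ i, d i ≠ 0 → 0 ≤ z' i ∧ z' i ≤ 1 := by
    intro i hdne
    have hiS : i ∈ S := (hmemS i).2 hdne
    have hzi := hfrac i (hsupp i hdne)
    have hle : t ≤ b i := hi₀min i hiS
    by_cases hdi : 0 < d i
    · have hb' : b i = (1 - z i) / d i := by simp [hb, if_pos hdi]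
      have : t * d i ≤ 1 - z i := by
        rw [hb', le_div_iff₀ hdi] at hle; linarith
      constructor
      · have : 0 ≤ t * d i := le_of_lt (mul_pos htpos hdi)
        simp only [hz']; linarith [hzi.1]
      · simp only [hz']; linarith
    · have hdneg : d i < 0 := lt_of_le_of_ne (not_lt.1 hdi) hdne
      have hb' : b i = z i / (-d i) := by simp [hb, if_neg hdi]
      have h2 : t * (-d i) ≤ z i := by
        rw [hb', le_div_iff₀ (by linarith)] at hle; linarith
      constructor
      · simp only [hz']; nlinarith
      · have : t * d i < 0 := mul_neg_of_pos_of_neg htpos hdneg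
        simp only [hz']; linarith [hzi.2]
  have hbox' : ∀ i, 0 ≤ z' i ∧ z' i ≤ 1 := by
    intro i
    by_cases hdi : d i = 0
    · simp only [hz', hdi, mul_zero, add_zero]; exact hz i
    · exact hbound i hdi
  have hz'i₀ : z' i₀ = 0 ∨ z' i₀ = 1 := by
    have hdne : d i₀ ≠ 0 := (hmemS i₀).1 hi₀S
    by_cases hdi : 0 < d i₀
    · right
      have : t = (1 - z i₀) / d i₀ := by simp [ht, hb, if_pos hdi]
      simp only [hz', this]
      field_simp
      ring
    · left
      have hdneg : d i₀ < 0 := lt_of_le_of_ne (not_lt.1 hdi) hdne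
      have : t = z i₀ / (-d i₀) := by simp [ht, hb, if_neg hdi]
      simp only [hz', this]
      field_simp
      ring
  have hsub : fracSet n z' ⊆ fracSet n z := by
    intro i hi
    simp only [fracSet, Finset.mem_filter] at hi
    by_cases hdi : d i = 0
    · have hzi : z' i = z i := by simp [hz', hdi]
      rw [hzi] at hi
      simp only [fracSet, Finset.mem_filter]
      exact ⟨Finset.mem_univ i, hi.2⟩
    · exact hsupp i hdi
  have hssub : fracSet n z' ⊂ fracSet n z := by
    refine ⟨hsub, fun hsub' => ?_⟩
    have hi₀frac : i₀ ∈ fracSet n z := hsupp i₀ ((hmemS i₀).1 hi₀S)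
    have : i₀ ∈ fracSet n z' := hsub' hi₀frac
    simp only [fracSet, Finset.mem_filter] at this
    rcases hz'i₀ with h | h
    · exact this.2.1 h
    · exact this.2.2 h
  refine ⟨z', hbox', ?_, hssub⟩
  have hWz' : W.mulVec z' = W.mulVec z := by
    have : z' = z + t • d := by funext i; simp [hz', smul_eq_mul]
    rw [this, Matrix.mulVec_add, Matrix.mulVec_smul, hWd]
    simp
  have hcz' : ∑ i, c i * z' i = (∑ i, c i * z i) + t * ∑ i, c i * d i := by
    simp only [hz']
    rw [Finset.mul_sum, ← Finset.sum_add_distrib]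
    apply Finset.sum_congr rfl
    intro i _
    ring
  rw [hWz', hcz']
  nlinarith [mul_nonpos_of_nonneg_of_nonpos (le_of_lt htpos) hcd]

lemma exists_dir {m n : ℕ} (W : Matrix (Fin m) (Fin n) ℝ) (z : Fin n → ℝ)
    (hcard : m < (fracSet n z).card) :
    ∃ d : Fin n → ℝ, (∃ i, d i ≠ 0) ∧ (∀ i, d i ≠ 0 → i ∈ fracSet n z) ∧
      W.mulVec d = 0 := by
  classical
  set F := fracSet n z with hF
  set v : ↥F → (Fin m → ℝ) := fun i => fun j => W j i with hv
  have hnli : ¬ LinearIndependent ℝ v := by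
    intro h
    have h1 : Fintype.card ↥F ≤ Module.finrank ℝ (Fin m → ℝ) :=
      h.fintype_card_le_finrank
    rw [Module.finrank_fintype_fun_eq_card, Fintype.card_coe, Fintype.card_fin] at h1
    omega
  rw [Fintype.not_linearIndependent_iff] at hnli
  obtain ⟨a, ha, i₁, hi₁⟩ := hnli
  refine ⟨fun i => if h : i ∈ F then a ⟨i, h⟩ else 0, ⟨i₁, ?_⟩, ?_, ?_⟩
  · simp [i₁.2, hi₁]
  · intro i hi
    by_contra h
    simp [h] at hi
  · funext j
    have haj := congrFun ha j
    simp only [Finset.sum_apply, Pi.smul_apply, smul_eq_mul, Pi.zero_apply, hv] at haj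
    simp only [Matrix.mulVec, dotProduct]
    rw [show (0 : Fin m → ℝ) j = 0 from rfl]
    rw [← Finset.sum_subset (Finset.subset_univ F)]
    · rw [← Finset.sum_attach F (fun i => W j i * (if h : i ∈ F then a ⟨i, h⟩ else 0))]
      rw [← haj]
      apply Finset.sum_congr rfl
      intro i _
      simp [i.2, mul_comm]
    · intro i _ hiF
      simp [hiF]

/-- If the convex relaxation `min{cᵀx + g(Wx) : x ∈ [0,1]^n}` attains its
minimum, then some optimal solution has at most `m` fractional components. -/
theorem stmt8 (m n : ℕ) (W : Matrix (Fin m) (Fin n) ℝ) (c : Fin n → ℝ)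
    (g : (Fin m → ℝ) → ℝ) (hg : ConvexOn ℝ Set.univ g)
    (f : (Fin n → ℝ) → ℝ) (hf : f = fun x => (∑ i, c i * x i) + g (W.mulVec x))
    (box : Set (Fin n → ℝ)) (hbox : box = {x | ∀ i, 0 ≤ x i ∧ x i ≤ 1})
    (hattain : ∃ x₀ ∈ box, ∀ x ∈ box, f x₀ ≤ f x) :
    ∃ z ∈ box, (∀ x ∈ box, f z ≤ f x) ∧
      Set.ncard {i : Fin n | z i ≠ 0 ∧ z i ≠ 1} ≤ m := by
  classical
  set T : Set ℕ := {k | ∃ z ∈ box, (∀ x ∈ box, f z ≤ f x) ∧ (fracSet n z).card = k} with hT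
  have hTne : T.Nonempty := by
    obtain ⟨x₀, hx₀, hopt⟩ := hattain
    exact ⟨(fracSet n x₀).card, x₀, hx₀, hopt, rfl⟩
  have hmem := Nat.sInf_mem hTne
  obtain ⟨z, hzbox, hzopt, hzcard⟩ := hmem
  have hncard : Set.ncard {i : Fin n | z i ≠ 0 ∧ z i ≠ 1} = (fracSet n z).card := by
    have : {i : Fin n | z i ≠ 0 ∧ z i ≠ 1} = ↑(fracSet n z) := by
      ext i; simp [fracSet]
    rw [this, Set.ncard_coe_finset]
  refine ⟨z, hzbox, hzopt, ?_⟩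
  rw [hncard]
  by_contra hcon
  push_neg at hcon
  obtain ⟨d, hd0, hsupp, hWd⟩ := exists_dir W z hcon
  have hzb : ∀ i, 0 ≤ z i ∧ z i ≤ 1 := by rw [hbox] at hzbox; exact hzbox
  have key : ∃ z' : Fin n → ℝ, (∀ i, 0 ≤ z' i ∧ z' i ≤ 1) ∧
      ((∑ i, c i * z' i) + g (W.mulVec z') ≤ (∑ i, c i * z i) + g (W.mulVec z)) ∧
      fracSet n z' ⊂ fracSet n z := by
    by_cases hcd : ∑ i, c i * d i ≤ 0
    · exact step_lemma W c g z hzb d hd0 hsupp hWd hcd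
    · refine step_lemma W c g z hzb (-d) ?_ ?_ ?_ ?_
      · obtain ⟨i, hi⟩ := hd0
        exact ⟨i, by simpa using hi⟩
      · intro i hi
        exact hsupp i (by simpa using hi)
      · rw [Matrix.mulVec_neg, hWd]; simp
      · push_neg at hcd
        have : ∑ i, c i * (-d) i = -∑ i, c i * d i := by
          rw [← Finset.sum_neg_distrib]
          apply Finset.sum_congr rfl
          intro i _
          simp
        rw [this]; linarith
  obtain ⟨z', hz'box, hz'le, hz'ssub⟩ := key
  have hz'boxmem : z' ∈ box := by rw [hbox]; exact hz'box
  have hz'opt : ∀ x ∈ box, f z' ≤ f x := by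
    intro x hx
    have h1 : f z' ≤ f z := by rw [hf]; exact hz'le
    exact le_trans h1 (hzopt x hx)
  have hlt : (fracSet n z').card < (fracSet n z).card := Finset.card_lt_card hz'ssub
  have hmem' : (fracSet n z').card ∈ T := ⟨z', hz'boxmem, hz'opt, rfl⟩
  have := Nat.sInf_le hmem'
  omega
end
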